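/- arXiv:2107.09544 — 3 statements merged into one kernel-verified Lean document; each statement's English description precedes it below -/
import Mathlib

section
/- (Perturbation of the tensor least squares problem, full column rank case.) Let A and E be real tensors of size n₁×n₂×n₃, Ã = A+E (entrywise), and let B and K be tensors of size n₁×n₄×n₃, B̃ = B+K. Let Ap and Ãp be Moore-Penrose inverses of A and Ã, and set X = Ap*B (the minimal-Frobenius-norm least squares solution of A*X ≈ B), X̃ = Ãp*B̃, H = X̃ − X, and R = B − A*X. Assume rank(Â⁽ⁱ⁾) = rank(Ã̂⁽ⁱ⁾) = n₂ for every i ∈ ZMod n₃ and ‖Ap‖₂·‖E‖₂ < 1, and set γ = 1 − ‖Ap‖₂·‖E‖₂. Then ‖H‖_F ≤ (‖Ap‖₂/γ)·(‖E‖₂·‖X‖_F + ‖K‖_F + (‖Ap‖₂/γ)·‖E‖₂·‖R‖_F) and ‖H‖₂ ≤ (‖Ap‖₂/γ)·(‖E‖₂·‖X‖₂ + ‖K‖₂ + (‖Ap‖₂/γ)·‖E‖₂·‖R‖₂). -/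
open scoped Matrix.Norms.L2Operator

noncomputable section

/-- The t-product of third-order tensors. -/
def tProd {n₁ n₂ n₃ n₄ : ℕ} [NeZero n₃] (A : Fin n₁ → Fin n₂ → ZMod n₃ → ℝ)
    (B : Fin n₂ → Fin n₄ → ZMod n₃ → ℝ) : Fin n₁ → Fin n₄ → ZMod n₃ → ℝ :=
  fun i j k => ∑ l : Fin n₂, ∑ m : ZMod n₃, A i l (k - m) * B l j m

/-- The Frobenius norm of a third-order tensor. -/
def frobNorm {n₁ n₂ n₃ : ℕ} [NeZero n₃] (A : Fin n₁ → Fin n₂ → ZMod n₃ → ℝ) : ℝ :=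
  Real.sqrt (∑ i : Fin n₁, ∑ j : Fin n₂, ∑ k : ZMod n₃, (A i j k) ^ 2)

/-- The block circulant matrix of a third-order tensor. -/
def bcirc {n₁ n₂ n₃ : ℕ} (A : Fin n₁ → Fin n₂ → ZMod n₃ → ℝ) :
    Matrix (Fin n₁ × ZMod n₃) (Fin n₂ × ZMod n₃) ℝ :=
  fun p q => A p.1 q.1 (p.2 - q.2)

/-- The spectral norm of a third-order tensor: the L2 operator norm of its
block circulant matrix. -/
def specNorm {n₁ n₂ n₃ : ℕ} [NeZero n₃] (A : Fin n₁ → Fin n₂ → ZMod n₃ → ℝ) : ℝ :=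
  ‖bcirc A‖

/-- The identity tensor. -/
def tId (n n₃ : ℕ) : Fin n → Fin n → ZMod n₃ → ℝ :=
  fun i j k => if i = j ∧ k = 0 then 1 else 0

/-- The tensor transpose. -/
def tTrans {n₁ n₂ n₃ : ℕ} (A : Fin n₁ → Fin n₂ → ZMod n₃ → ℝ) :
    Fin n₂ → Fin n₁ → ZMod n₃ → ℝ :=
  fun i j k => A j i (-k)

/-- `X` is a Moore-Penrose inverse of `A`. -/
def IsMPInv {n₁ n₂ n₃ : ℕ} [NeZero n₃] (A : Fin n₁ → Fin n₂ → ZMod n₃ → ℝ)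
    (X : Fin n₂ → Fin n₁ → ZMod n₃ → ℝ) : Prop :=
  tProd (tProd A X) A = A ∧ tProd (tProd X A) X = X ∧
    tTrans (tProd A X) = tProd A X ∧ tTrans (tProd X A) = tProd X A

/-- The `i`-th DFT block of a third-order tensor. -/
def dftBlock {n₁ n₂ n₃ : ℕ} [NeZero n₃] (A : Fin n₁ → Fin n₂ → ZMod n₃ → ℝ) (i : ZMod n₃) :
    Matrix (Fin n₁) (Fin n₂) ℂ :=
  fun p q => ∑ k : ZMod n₃,
    Complex.exp (-2 * Real.pi * Complex.I * (i.val : ℂ) * (k.val : ℂ) / (n₃ : ℂ)) * (A p q k : ℂ)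

end


open scoped Matrix.Norms.L2Operator
open Matrix

set_option linter.unusedSectionVars false
noncomputable section LSAux

namespace LSAux

variable {ι κ τ : Type*} [Fintype ι] [Fintype κ] [Fintype τ]
variable [DecidableEq ι] [DecidableEq κ] [DecidableEq τ]

/-- Euclidean norm of a plain vector. -/
def enorm (v : ι → ℝ) : ℝ := ‖((WithLp.equiv 2 (ι → ℝ)).symm v : EuclideanSpace ℝ ι)‖

lemma enorm_nonneg (v : ι → ℝ) : 0 ≤ enorm v := norm_nonneg _

lemma enorm_mulVec_le (M : Matrix ι κ ℝ) (v : κ → ℝ) :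
    enorm (M *ᵥ v) ≤ ‖M‖ * enorm v := by
  have := M.l2_opNorm_mulVec ((WithLp.equiv 2 (κ → ℝ)).symm v)
  simpa [enorm] using this

lemma enorm_sub_le (u v : ι → ℝ) : enorm (u - v) ≤ enorm u + enorm v := by
  have : ((WithLp.equiv 2 (ι → ℝ)).symm (u - v) : EuclideanSpace ℝ ι)
      = (WithLp.equiv 2 (ι → ℝ)).symm u - (WithLp.equiv 2 (ι → ℝ)).symm v := by
    simp
  rw [enorm, this]
  exact norm_sub_le _ _

/-- Frobenius norm of a real matrix, as a Euclidean norm. -/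
def frobM (M : Matrix ι κ ℝ) : ℝ :=
  ‖((WithLp.equiv 2 ((ι × κ) → ℝ)).symm (fun p => M p.1 p.2) : EuclideanSpace ℝ (ι × κ))‖

lemma frobM_nonneg (M : Matrix ι κ ℝ) : 0 ≤ frobM M := norm_nonneg _

lemma frobM_eq (M : Matrix ι κ ℝ) :
    frobM M = Real.sqrt (∑ i : ι, ∑ j : κ, (M i j) ^ 2) := by
  rw [frobM, EuclideanSpace.norm_eq]
  congr 1
  rw [Fintype.sum_prod_type]
  refine Finset.sum_congr rfl fun i _ => Finset.sum_congr rfl fun j _ => ?_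
  simp [sq_abs]

lemma frobM_sq (M : Matrix ι κ ℝ) :
    frobM M ^ 2 = ∑ i : ι, ∑ j : κ, (M i j) ^ 2 := by
  rw [frobM_eq, Real.sq_sqrt]
  positivity

lemma frobM_add_le (M N : Matrix ι κ ℝ) : frobM (M + N) ≤ frobM M + frobM N := by
  have : ((WithLp.equiv 2 ((ι × κ) → ℝ)).symm (fun p => (M + N) p.1 p.2) : EuclideanSpace ℝ (ι × κ))
      = (WithLp.equiv 2 ((ι × κ) → ℝ)).symm (fun p => M p.1 p.2)
        + (WithLp.equiv 2 ((ι × κ) → ℝ)).symm (fun p => N p.1 p.2) := by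
    simp [Matrix.add_apply]
    rfl
  rw [frobM, this]
  exact norm_add_le _ _

lemma frobM_sub_le (M N : Matrix ι κ ℝ) : frobM (M - N) ≤ frobM M + frobM N := by
  have : ((WithLp.equiv 2 ((ι × κ) → ℝ)).symm (fun p => (M - N) p.1 p.2) : EuclideanSpace ℝ (ι × κ))
      = (WithLp.equiv 2 ((ι × κ) → ℝ)).symm (fun p => M p.1 p.2)
        - (WithLp.equiv 2 ((ι × κ) → ℝ)).symm (fun p => N p.1 p.2) := by
    simp [Matrix.sub_apply]
    rfl
  rw [frobM, this]
  exact norm_sub_le _ _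

lemma enorm_col_sq (M : Matrix ι κ ℝ) (j : κ) :
    enorm (fun i => M i j) ^ 2 = ∑ i : ι, (M i j) ^ 2 := by
  rw [enorm, EuclideanSpace.norm_eq, Real.sq_sqrt (by positivity)]
  refine Finset.sum_congr rfl fun i _ => ?_
  simp [sq_abs]

lemma frobM_mul_le (M : Matrix ι κ ℝ) (N : Matrix κ τ ℝ) :
    frobM (M * N) ≤ ‖M‖ * frobM N := by
  have hcol : ∀ j : τ, ∑ i : ι, (M * N) i j ^ 2 ≤ ‖M‖ ^ 2 * ∑ i : κ, N i j ^ 2 := by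
    intro j
    have h1 : enorm (fun i => (M * N) i j) ≤ ‖M‖ * enorm (fun i => N i j) := by
      have : (fun i => (M * N) i j) = M *ᵥ (fun i => N i j) := by
        ext i
        simp [Matrix.mul_apply, Matrix.mulVec, dotProduct]
      rw [this]
      exact enorm_mulVec_le M _
    calc ∑ i : ι, (M * N) i j ^ 2 = enorm (fun i => (M * N) i j) ^ 2 :=
          (enorm_col_sq _ j).symm
      _ ≤ (‖M‖ * enorm (fun i => N i j)) ^ 2 := by
          have := enorm_nonneg (fun i => (M * N) i j)
          nlinarith [enorm_nonneg (fun i => N i j), norm_nonneg M]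
      _ = ‖M‖ ^ 2 * (∑ i : κ, N i j ^ 2) := by rw [mul_pow, enorm_col_sq]
  have hsq : frobM (M * N) ^ 2 ≤ ‖M‖ ^ 2 * frobM N ^ 2 := by
    rw [frobM_sq, frobM_sq]
    calc (∑ i : ι, ∑ j : τ, (M * N) i j ^ 2) = ∑ j : τ, ∑ i : ι, (M * N) i j ^ 2 :=
          Finset.sum_comm
      _ ≤ ∑ j : τ, ‖M‖ ^ 2 * ∑ i : κ, N i j ^ 2 := Finset.sum_le_sum fun j _ => hcol j
      _ = ‖M‖ ^ 2 * ∑ j : τ, ∑ i : κ, N i j ^ 2 := by rw [← Finset.mul_sum]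
      _ = ‖M‖ ^ 2 * ∑ i : κ, ∑ j : τ, N i j ^ 2 := by rw [Finset.sum_comm]
  have h0 : 0 ≤ ‖M‖ * frobM N := mul_nonneg (norm_nonneg _) (frobM_nonneg _)
  nlinarith [frobM_nonneg (M * N)]

lemma l2_opNorm_le_of_forall {M : Matrix ι κ ℝ} {c : ℝ} (hc : 0 ≤ c)
    (h : ∀ v : κ → ℝ, enorm (M *ᵥ v) ≤ c * enorm v) : ‖M‖ ≤ c := by
  classical
  rw [Matrix.l2_opNorm_def]
  refine ContinuousLinearMap.opNorm_le_bound _ hc fun x => ?_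
  have hx : x = (WithLp.equiv 2 (κ → ℝ)).symm ((WithLp.equiv 2 (κ → ℝ)) x) := by simp
  have := h ((WithLp.equiv 2 (κ → ℝ)) x)
  rw [enorm, enorm] at this
  simpa [Matrix.toEuclideanLin_apply] using this

lemma transpose_norm (M : Matrix ι κ ℝ) [DecidableEq ι] : ‖Mᵀ‖ = ‖M‖ := by
  have h : Mᴴ = Mᵀ := by
    ext i j
    simp [Matrix.conjTranspose_apply]
  rw [← h, Matrix.l2_opNorm_conjTranspose]

lemma proj_norm_le_one {Q : Matrix ι ι ℝ} [DecidableEq ι] (h1 : Qᵀ = Q) (h2 : Q * Q = Q) :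
    ‖Q‖ ≤ 1 := by
  have hC : ‖Qᴴ * Q‖ = ‖Q‖ * ‖Q‖ := Q.l2_opNorm_conjTranspose_mul_self
  have hH : Qᴴ = Qᵀ := by
    ext i j
    simp [Matrix.conjTranspose_apply]
  rw [hH, h1, h2] at hC
  nlinarith [norm_nonneg Q]

end LSAux

end LSAux


set_option linter.unusedSectionVars false

namespace LSAux

open Matrix

variable {n₁ n₂ n₃ n₄ : ℕ} [NeZero n₃]

lemma bcirc_add (A E : Fin n₁ → Fin n₂ → ZMod n₃ → ℝ) :
    bcirc (A + E) = bcirc A + bcirc E := rfl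

lemma bcirc_sub (A E : Fin n₁ → Fin n₂ → ZMod n₃ → ℝ) :
    bcirc (A - E) = bcirc A - bcirc E := rfl

lemma bcirc_transpose (A : Fin n₁ → Fin n₂ → ZMod n₃ → ℝ) :
    bcirc (tTrans A) = (bcirc A)ᵀ := by
  ext p q
  show A q.1 p.1 (-(p.2 - q.2)) = A q.1 p.1 (q.2 - p.2)
  rw [neg_sub]

lemma bcirc_mul (A : Fin n₁ → Fin n₂ → ZMod n₃ → ℝ) (B : Fin n₂ → Fin n₄ → ZMod n₃ → ℝ) :
    bcirc (tProd A B) = bcirc A * bcirc B := by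
  ext p q
  rw [Matrix.mul_apply]
  show (∑ l : Fin n₂, ∑ m : ZMod n₃, A p.1 l (p.2 - q.2 - m) * B l q.1 m) = _
  rw [Fintype.sum_prod_type]
  refine Finset.sum_congr rfl fun l _ => ?_
  refine Fintype.sum_equiv (Equiv.addRight q.2) _ _ fun t => ?_
  show A p.1 l (p.2 - q.2 - t) * B l q.1 t = A p.1 l (p.2 - (t + q.2)) * B l q.1 (t + q.2 - q.2)
  rw [add_sub_cancel_right]
  congr 2
  ring

lemma frobM_bcirc (A : Fin n₁ → Fin n₂ → ZMod n₃ → ℝ) :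
    frobM (bcirc A) = Real.sqrt n₃ * frobNorm A := by
  rw [frobM_eq, frobNorm, ← Real.sqrt_mul (by positivity)]
  congr 1
  have key : ∀ i : Fin n₁, ∀ k : ZMod n₃,
      (∑ q : Fin n₂ × ZMod n₃, bcirc A (i, k) q ^ 2)
        = ∑ j : Fin n₂, ∑ t : ZMod n₃, A i j t ^ 2 := by
    intro i k
    rw [Fintype.sum_prod_type]
    refine Finset.sum_congr rfl fun j _ => ?_
    exact Fintype.sum_equiv (Equiv.subLeft k) _ _ fun t => rfl
  calc (∑ p : Fin n₁ × ZMod n₃, ∑ q : Fin n₂ × ZMod n₃, bcirc A p q ^ 2)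
      = ∑ i : Fin n₁, ∑ k : ZMod n₃, ∑ q : Fin n₂ × ZMod n₃, bcirc A (i, k) q ^ 2 :=
        Fintype.sum_prod_type _
    _ = ∑ i : Fin n₁, ∑ k : ZMod n₃, ∑ j : Fin n₂, ∑ t : ZMod n₃, A i j t ^ 2 :=
        Finset.sum_congr rfl fun i _ => Finset.sum_congr rfl fun k _ => key i k
    _ = ∑ k : ZMod n₃, ∑ i : Fin n₁, ∑ j : Fin n₂, ∑ t : ZMod n₃, A i j t ^ 2 :=
        Finset.sum_comm
    _ = (n₃ : ℝ) * ∑ i : Fin n₁, ∑ j : Fin n₂, ∑ t : ZMod n₃, A i j t ^ 2 := by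
        rw [Finset.sum_const, Finset.card_univ, ZMod.card, nsmul_eq_mul]

lemma mp_left_inverse {m k : Type*} [Fintype m] [Fintype k] [DecidableEq k]
    {M : Matrix m k ℝ} {P : Matrix k m ℝ}
    (h1 : M * P * M = M) (hinj : ∀ v : k → ℝ, M *ᵥ v = 0 → v = 0) : P * M = 1 := by
  set D : Matrix k k ℝ := P * M - 1 with hDdef
  have hMD : M * D = 0 := by
    rw [hDdef, Matrix.mul_sub, Matrix.mul_one, ← Matrix.mul_assoc, h1, sub_self]
  have hD : D = 0 := by
    ext l j
    have hv : M *ᵥ (fun l : k => D l j) = 0 := by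
      ext i
      have h2 : (M *ᵥ fun l : k => D l j) i = (M * D) i j := by
        simp [Matrix.mulVec, Matrix.mul_apply, dotProduct]
      rw [h2, hMD]
      rfl
    have := congrFun (hinj _ hv) l
    simpa using this
  have h3 := sub_eq_zero.mp hD
  exact h3

end LSAux

namespace LSAux

open Matrix Complex

variable {n₃ : ℕ} [NeZero n₃]

lemma pow_mod_eq {u : ℂ} (hu : u ^ n₃ = 1) (a : ℕ) : u ^ a = u ^ (a % n₃) := by
  conv_lhs => rw [← Nat.div_add_mod a n₃]
  rw [pow_add, pow_mul, hu, one_pow, one_mul]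

lemma pow_congr_mod {u : ℂ} (hu : u ^ n₃ = 1) {a b : ℕ} (h : a % n₃ = b % n₃) :
    u ^ a = u ^ b := by
  rw [pow_mod_eq hu a, pow_mod_eq hu b, h]

lemma xi_prim : IsPrimitiveRoot (Complex.exp (2 * Real.pi * Complex.I / n₃)) n₃ :=
  Complex.isPrimitiveRoot_exp n₃ (NeZero.ne n₃)

lemma zeta_eq_inv :
    Complex.exp (-2 * Real.pi * Complex.I / n₃)
      = (Complex.exp (2 * Real.pi * Complex.I / n₃))⁻¹ := by
  rw [← Complex.exp_neg]
  congr 1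
  ring

lemma zeta_pow_n : Complex.exp (-2 * Real.pi * Complex.I / n₃) ^ n₃ = 1 := by
  rw [zeta_eq_inv, inv_pow, xi_prim.pow_eq_one, inv_one]

lemma sum_pow_val {u : ℂ} (hu : u ^ n₃ = 1) :
    ∑ i : ZMod n₃, u ^ i.val = if u = 1 then (n₃ : ℂ) else 0 := by
  have hsum : ∑ i : ZMod n₃, u ^ i.val = ∑ a ∈ Finset.range n₃, u ^ a := by
    refine Finset.sum_nbij' (fun i => i.val) (fun a => (a : ZMod n₃)) ?_ ?_ ?_ ?_ ?_
    · intro i _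
      exact Finset.mem_range.mpr i.val_lt
    · intro a _
      exact Finset.mem_univ _
    · intro i _
      exact ZMod.natCast_rightInverse i
    · intro a ha
      exact ZMod.val_cast_of_lt (Finset.mem_range.mp ha)
    · intro i _
      rfl
  rw [hsum]
  split_ifs with h1
  · simp [h1, ZMod.card]
  · rw [geom_sum_eq h1, hu, sub_self, zero_div]

/-- A complex matrix of full column rank has injective `mulVec`. -/
lemma rank_inj {m n : ℕ} (M : Matrix (Fin m) (Fin n) ℂ) (h : M.rank = n)
    {v : Fin n → ℂ} (hv : M *ᵥ v = 0) : v = 0 := by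
  have h1 := LinearMap.finrank_range_add_finrank_ker M.mulVecLin
  rw [Module.finrank_fintype_fun_eq_card, Fintype.card_fin] at h1
  have h2 : Module.finrank ℂ (LinearMap.range M.mulVecLin) = n := h
  have h3 : Module.finrank ℂ (LinearMap.ker M.mulVecLin) = 0 := by omega
  have h4 : LinearMap.ker M.mulVecLin = ⊥ := Submodule.finrank_eq_zero.mp h3
  have h5 : v ∈ LinearMap.ker M.mulVecLin := by
    rw [LinearMap.mem_ker, Matrix.mulVecLin_apply, hv]
  rw [h4, Submodule.mem_bot] at h5
  exact h5

variable {n₁ n₂ : ℕ}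

/-- Full rank of all DFT blocks implies injectivity of the block circulant. -/
lemma bcirc_inj (A : Fin n₁ → Fin n₂ → ZMod n₃ → ℝ)
    (hr : ∀ i : ZMod n₃, (dftBlock A i).rank = n₂) :
    ∀ x : Fin n₂ × ZMod n₃ → ℝ, bcirc A *ᵥ x = 0 → x = 0 := by
  intro x hx
  set ζ : ℂ := Complex.exp (-2 * Real.pi * Complex.I / n₃) with hζdef
  set ξ : ℂ := Complex.exp (2 * Real.pi * Complex.I / n₃) with hξdef
  have hξ0 : ξ ≠ 0 := Complex.exp_ne_zero _
  have hζn : ζ ^ n₃ = 1 := zeta_pow_n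
  set xh : ZMod n₃ → Fin n₂ → ℂ :=
    fun i j => ∑ m : ZMod n₃, ζ ^ (i.val * m.val) * (x (j, m) : ℂ) with hxhdef
  -- each DFT block kills the transformed vector
  have claim1 : ∀ i : ZMod n₃, dftBlock A i *ᵥ xh i = 0 := by
    intro i
    have hdft : ∀ (p : Fin n₁) (j : Fin n₂),
        dftBlock A i p j = ∑ k : ZMod n₃, ζ ^ (i.val * k.val) * (A p j k : ℂ) := by
      intro p j
      show (∑ k : ZMod n₃,
          Complex.exp (-2 * Real.pi * Complex.I * (i.val : ℂ) * (k.val : ℂ) / (n₃ : ℂ))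
            * (A p j k : ℂ)) = _
      refine Finset.sum_congr rfl fun k _ => ?_
      congr 1
      have harg : (-2 * (Real.pi : ℂ) * Complex.I * (i.val : ℂ) * (k.val : ℂ) / (n₃ : ℂ))
          = ((i.val * k.val : ℕ) : ℂ) * (-2 * (Real.pi : ℂ) * Complex.I / (n₃ : ℂ)) := by
        push_cast
        ring
      rw [harg, Complex.exp_nat_mul]
    ext p
    show (∑ j : Fin n₂, dftBlock A i p j * xh i j) = 0
    have hterm : ∀ j : Fin n₂, dftBlock A i p j * xh i j
        = ∑ m : ZMod n₃, ∑ s : ZMod n₃,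
            ζ ^ (i.val * s.val) * ((A p j (s - m) : ℂ) * (x (j, m) : ℂ)) := by
      intro j
      rw [hdft p j]
      show (∑ k : ZMod n₃, ζ ^ (i.val * k.val) * (A p j k : ℂ))
          * (∑ m : ZMod n₃, ζ ^ (i.val * m.val) * (x (j, m) : ℂ)) = _
      rw [Finset.mul_sum]
      refine Finset.sum_congr rfl fun m _ => ?_
      rw [Finset.sum_mul]
      refine Fintype.sum_equiv (Equiv.addRight m) _ _ fun k => ?_
      show ζ ^ (i.val * k.val) * (A p j k : ℂ) * (ζ ^ (i.val * m.val) * (x (j, m) : ℂ))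
          = ζ ^ (i.val * ((k + m) : ZMod n₃).val) * ((A p j (k + m - m) : ℂ) * (x (j, m) : ℂ))
      rw [add_sub_cancel_right]
      have hmod : (((k + m) : ZMod n₃).val) % n₃ = (k.val + m.val) % n₃ := by
        rw [ZMod.val_add, Nat.mod_mod_of_dvd _ dvd_rfl]
      have hz : ζ ^ (i.val * ((k + m) : ZMod n₃).val)
          = ζ ^ (i.val * k.val) * ζ ^ (i.val * m.val) := by
        rw [← pow_add]
        refine pow_congr_mod hζn ?_
        have h2 : i.val * ((k + m) : ZMod n₃).val ≡ i.val * (k.val + m.val) [MOD n₃] :=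
          Nat.ModEq.mul_left _ hmod
        rw [Nat.mul_add] at h2
        exact h2
      rw [hz]
      ring
    have hcast : ∀ s : ZMod n₃,
        (∑ j : Fin n₂, ∑ m : ZMod n₃, ((A p j (s - m) : ℂ) * (x (j, m) : ℂ)))
          = (((bcirc A *ᵥ x) (p, s) : ℝ) : ℂ) := by
      intro s
      have : (bcirc A *ᵥ x) (p, s)
          = ∑ j : Fin n₂, ∑ m : ZMod n₃, A p j (s - m) * x (j, m) := by
        show (∑ q : Fin n₂ × ZMod n₃, bcirc A (p, s) q * x q) = _
        rw [Fintype.sum_prod_type]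
        rfl
      rw [this]
      push_cast
      rfl
    calc (∑ j : Fin n₂, dftBlock A i p j * xh i j)
        = ∑ j : Fin n₂, ∑ m : ZMod n₃, ∑ s : ZMod n₃,
            ζ ^ (i.val * s.val) * ((A p j (s - m) : ℂ) * (x (j, m) : ℂ)) :=
          Finset.sum_congr rfl fun j _ => hterm j
      _ = ∑ j : Fin n₂, ∑ s : ZMod n₃, ∑ m : ZMod n₃,
            ζ ^ (i.val * s.val) * ((A p j (s - m) : ℂ) * (x (j, m) : ℂ)) :=
          Finset.sum_congr rfl fun j _ => Finset.sum_comm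
      _ = ∑ s : ZMod n₃, ∑ j : Fin n₂, ∑ m : ZMod n₃,
            ζ ^ (i.val * s.val) * ((A p j (s - m) : ℂ) * (x (j, m) : ℂ)) :=
          Finset.sum_comm
      _ = ∑ s : ZMod n₃, ζ ^ (i.val * s.val) * ∑ j : Fin n₂, ∑ m : ZMod n₃,
            ((A p j (s - m) : ℂ) * (x (j, m) : ℂ)) := by
          refine Finset.sum_congr rfl fun s _ => ?_
          rw [Finset.mul_sum]
          refine Finset.sum_congr rfl fun j _ => ?_
          rw [Finset.mul_sum]
      _ = 0 := by
          refine Finset.sum_eq_zero fun s _ => ?_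
          rw [hcast s, hx]
          simp
  have claim2 : ∀ i : ZMod n₃, xh i = 0 := fun i => rank_inj _ (hr i) (claim1 i)
  -- inverse DFT
  funext q
  obtain ⟨j, k⟩ := q
  have h0 : ∑ i : ZMod n₃, ξ ^ (i.val * k.val) * xh i j = 0 := by
    refine Finset.sum_eq_zero fun i _ => ?_
    rw [claim2 i]
    simp
  have hzx : ∀ a b : ℕ, ξ ^ a * ζ ^ b = ξ ^ ((a : ℤ) - (b : ℤ)) := by
    intro a b
    rw [hζdef, zeta_eq_inv, ← hξdef, inv_pow, ← zpow_natCast ξ a, ← zpow_natCast ξ b,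
      ← _root_.zpow_neg, ← zpow_add₀ hξ0]
    ring_nf
  have hinner : ∀ m : ZMod n₃,
      (∑ i : ZMod n₃, ξ ^ ((i.val : ℤ) * ((k.val : ℤ) - (m.val : ℤ))))
        = if m = k then (n₃ : ℂ) else 0 := by
    intro m
    set t : ℤ := (k.val : ℤ) - (m.val : ℤ) with htdef
    have hsum : (∑ i : ZMod n₃, ξ ^ ((i.val : ℤ) * t)) = ∑ i : ZMod n₃, (ξ ^ t) ^ i.val := by
      refine Finset.sum_congr rfl fun i _ => ?_
      rw [← zpow_natCast (ξ ^ t) i.val, ← _root_.zpow_mul, mul_comm]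
    have hu1 : (ξ ^ t) ^ n₃ = 1 := by
      rw [← zpow_natCast (ξ ^ t) n₃, ← _root_.zpow_mul, mul_comm, _root_.zpow_mul, zpow_natCast,
        xi_prim.pow_eq_one, _root_.one_zpow]
    rw [hsum, sum_pow_val hu1]
    have hiff : ξ ^ t = 1 ↔ m = k := by
      rw [xi_prim.zpow_eq_one_iff_dvd]
      constructor
      · intro hdvd
        by_contra hne
        have hne' : t ≠ 0 := by
          simp only [htdef, sub_ne_zero]
          intro hc
          exact hne (ZMod.val_injective n₃ (by exact_mod_cast hc)).symm
        have habs : (n₃ : ℤ) ≤ |t| := Int.le_of_dvd (abs_pos.mpr hne') ((dvd_abs _ _).mpr hdvd)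
        have hk : (k.val : ℤ) < n₃ := by exact_mod_cast ZMod.val_lt k
        have hm : (m.val : ℤ) < n₃ := by exact_mod_cast ZMod.val_lt m
        have hk0 : (0 : ℤ) ≤ (k.val : ℤ) := by positivity
        have hm0 : (0 : ℤ) ≤ (m.val : ℤ) := by positivity
        have htlt : |t| < n₃ := abs_lt.mpr ⟨by rw [htdef]; omega, by rw [htdef]; omega⟩
        linarith
      · intro h
        rw [h] at htdef
        simp [htdef]
    by_cases hmk : m = k
    · rw [if_pos (hiff.mpr hmk), if_pos hmk]
    · rw [if_neg (fun hc => hmk (hiff.mp hc)), if_neg hmk]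
  have heval : ∑ i : ZMod n₃, ξ ^ (i.val * k.val) * xh i j = (n₃ : ℂ) * (x (j, k) : ℂ) := by
    calc (∑ i : ZMod n₃, ξ ^ (i.val * k.val) * xh i j)
        = ∑ i : ZMod n₃, ∑ m : ZMod n₃,
            ξ ^ ((i.val : ℤ) * ((k.val : ℤ) - (m.val : ℤ))) * (x (j, m) : ℂ) := by
          refine Finset.sum_congr rfl fun i _ => ?_
          rw [hxhdef]
          simp only
          rw [Finset.mul_sum]
          refine Finset.sum_congr rfl fun m _ => ?_
          rw [← mul_assoc, hzx (i.val * k.val) (i.val * m.val)]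
          congr 2
          push_cast
          ring
      _ = ∑ m : ZMod n₃, ∑ i : ZMod n₃,
            ξ ^ ((i.val : ℤ) * ((k.val : ℤ) - (m.val : ℤ))) * (x (j, m) : ℂ) :=
          Finset.sum_comm
      _ = ∑ m : ZMod n₃, (if m = k then (n₃ : ℂ) else 0) * (x (j, m) : ℂ) := by
          refine Finset.sum_congr rfl fun m _ => ?_
          rw [← Finset.sum_mul, hinner m]
      _ = (n₃ : ℂ) * (x (j, k) : ℂ) := by
          simp [ite_mul]
  rw [heval] at h0
  have hn3 : (n₃ : ℂ) ≠ 0 := by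
    exact_mod_cast Nat.cast_ne_zero.mpr (NeZero.ne n₃)
  have := mul_eq_zero.mp h0
  rcases this with h | h
  · exact absurd h hn3
  · exact_mod_cast h

end LSAux

open LSAux Matrix


theorem least_squares_perturbation_full_rank (n₁ n₂ n₃ n₄ : ℕ) [NeZero n₃]
    (hn₁ : 0 < n₁) (hn₂ : 0 < n₂) (hn₄ : 0 < n₄)
    (A E : Fin n₁ → Fin n₂ → ZMod n₃ → ℝ)
    (B K : Fin n₁ → Fin n₄ → ZMod n₃ → ℝ)
    (Ap Atp : Fin n₂ → Fin n₁ → ZMod n₃ → ℝ)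
    (hAp : IsMPInv A Ap) (hAtp : IsMPInv (A + E) Atp)
    (hrankA : ∀ i : ZMod n₃, (dftBlock A i).rank = n₂)
    (hrankAt : ∀ i : ZMod n₃, (dftBlock (A + E) i).rank = n₂)
    (hE : specNorm Ap * specNorm E < 1) :
    frobNorm (tProd Atp (B + K) - tProd Ap B) ≤
        (specNorm Ap / (1 - specNorm Ap * specNorm E)) *
          (specNorm E * frobNorm (tProd Ap B) + frobNorm K +
            (specNorm Ap / (1 - specNorm Ap * specNorm E)) * specNorm E *
              frobNorm (B - tProd A (tProd Ap B))) ∧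
      specNorm (tProd Atp (B + K) - tProd Ap B) ≤
        (specNorm Ap / (1 - specNorm Ap * specNorm E)) *
          (specNorm E * specNorm (tProd Ap B) + specNorm K +
            (specNorm Ap / (1 - specNorm Ap * specNorm E)) * specNorm E *
              specNorm (B - tProd A (tProd Ap B))) := by
    classical
  obtain ⟨a1, a2, a3, a4⟩ := hAp
  obtain ⟨b1, b2, b3, b4⟩ := hAtp
  set M : Matrix (Fin n₁ × ZMod n₃) (Fin n₂ × ZMod n₃) ℝ := bcirc A with hMdef
  set F : Matrix (Fin n₁ × ZMod n₃) (Fin n₂ × ZMod n₃) ℝ := bcirc E with hFdef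
  set P : Matrix (Fin n₂ × ZMod n₃) (Fin n₁ × ZMod n₃) ℝ := bcirc Ap with hPdef
  set Pt : Matrix (Fin n₂ × ZMod n₃) (Fin n₁ × ZMod n₃) ℝ := bcirc Atp with hPtdef
  set N : Matrix (Fin n₁ × ZMod n₃) (Fin n₄ × ZMod n₃) ℝ := bcirc B with hNdef
  set L : Matrix (Fin n₁ × ZMod n₃) (Fin n₄ × ZMod n₃) ℝ := bcirc K with hLdef
  have hMF : bcirc (A + E) = M + F := bcirc_add A E
  -- Moore-Penrose identities at the matrix level
  have mA1 : M * P * M = M := by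
    rw [hMdef, hPdef, ← bcirc_mul, ← bcirc_mul, a1]
  have mA3 : (M * P)ᵀ = M * P := by
    rw [hMdef, hPdef, ← bcirc_mul, ← bcirc_transpose, a3, bcirc_mul]
  have mAt1 : (M + F) * Pt * (M + F) = M + F := by
    rw [← hMF, hPtdef, ← bcirc_mul, ← bcirc_mul, b1]
  have mAt2 : Pt * (M + F) * Pt = Pt := by
    rw [← hMF, hPtdef, ← bcirc_mul, ← bcirc_mul, b2]
  have mAt3 : ((M + F) * Pt)ᵀ = (M + F) * Pt := by
    rw [← hMF, hPtdef, ← bcirc_mul, ← bcirc_transpose, b3, bcirc_mul]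
  -- full column rank: left inverses
  have hPM : P * M = 1 :=
    mp_left_inverse mA1 (bcirc_inj A hrankA)
  have hPtMt : Pt * (M + F) = 1 := by
    refine mp_left_inverse mAt1 ?_
    rw [← hMF]
    exact bcirc_inj (A + E) hrankAt
  -- norms
  have hE' : ‖P‖ * ‖F‖ < 1 := hE
  have hγ : 0 < 1 - ‖P‖ * ‖F‖ := by linarith
  set γ : ℝ := 1 - ‖P‖ * ‖F‖ with hγdef
  set c : ℝ := ‖P‖ / γ with hcdef
  have hc0 : 0 ≤ c := div_nonneg (norm_nonneg _) hγ.le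
  -- the orthogonal projector (M+F) * Pt has norm at most one
  have hQt2 : ((M + F) * Pt) * ((M + F) * Pt) = (M + F) * Pt := by
    have hassoc : (((M + F) * Pt) * (M + F)) * Pt = ((M + F) * Pt) * ((M + F) * Pt) :=
      Matrix.mul_assoc _ _ _
    rw [← hassoc, mAt1]
  have hQtnorm : ‖(M + F) * Pt‖ ≤ 1 := proj_norm_le_one mAt3 hQt2
  -- bound on the norm of Pt
  have hPtle : ‖Pt‖ ≤ c := by
    refine l2_opNorm_le_of_forall hc0 fun y => ?_
    have key1 : ∀ v : (Fin n₂ × ZMod n₃) → ℝ, LSAux.enorm v ≤ ‖P‖ * LSAux.enorm (M *ᵥ v) := by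
      intro v
      have hv : P *ᵥ (M *ᵥ v) = v := by
        rw [Matrix.mulVec_mulVec, hPM, Matrix.one_mulVec]
      calc LSAux.enorm v = LSAux.enorm (P *ᵥ (M *ᵥ v)) := by rw [hv]
        _ ≤ ‖P‖ * LSAux.enorm (M *ᵥ v) := enorm_mulVec_le _ _
    have key2 : ∀ v : (Fin n₂ × ZMod n₃) → ℝ,
        γ * LSAux.enorm v ≤ ‖P‖ * LSAux.enorm ((M + F) *ᵥ v) := by
      intro v
      have h1 : LSAux.enorm (M *ᵥ v) ≤ LSAux.enorm ((M + F) *ᵥ v) + ‖F‖ * LSAux.enorm v := by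
        have he : M *ᵥ v = (M + F) *ᵥ v - F *ᵥ v := by
          rw [Matrix.add_mulVec]
          abel
        rw [he]
        exact le_trans (enorm_sub_le _ _)
          (add_le_add_right (enorm_mulVec_le F v) _)
      have h2 := key1 v
      have h3 : ‖P‖ * LSAux.enorm (M *ᵥ v) ≤ ‖P‖ * (LSAux.enorm ((M + F) *ᵥ v) + ‖F‖ * LSAux.enorm v) :=
        mul_le_mul_of_nonneg_left h1 (norm_nonneg _)
      have h4 : ‖P‖ * (LSAux.enorm ((M + F) *ᵥ v) + ‖F‖ * LSAux.enorm v)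
          = ‖P‖ * LSAux.enorm ((M + F) *ᵥ v) + ‖P‖ * ‖F‖ * LSAux.enorm v := by ring
      rw [hγdef, sub_mul, one_mul]
      linarith
    have h3 := key2 (Pt *ᵥ y)
    rw [Matrix.mulVec_mulVec] at h3
    have h4 : LSAux.enorm (((M + F) * Pt) *ᵥ y) ≤ ‖(M + F) * Pt‖ * LSAux.enorm y := enorm_mulVec_le _ _
    have h5 : ‖(M + F) * Pt‖ * LSAux.enorm y ≤ 1 * LSAux.enorm y :=
      mul_le_mul_of_nonneg_right hQtnorm (enorm_nonneg _)
    have h6 : ‖P‖ * LSAux.enorm (((M + F) * Pt) *ᵥ y) ≤ ‖P‖ * (‖(M + F) * Pt‖ * LSAux.enorm y) :=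
      mul_le_mul_of_nonneg_left h4 (norm_nonneg _)
    have h7 : ‖P‖ * (‖(M + F) * Pt‖ * LSAux.enorm y) ≤ ‖P‖ * (1 * LSAux.enorm y) :=
      mul_le_mul_of_nonneg_left h5 (norm_nonneg _)
    have h8 : ‖P‖ * (1 * LSAux.enorm y) = ‖P‖ * LSAux.enorm y := by ring
    rw [hcdef, div_mul_eq_mul_div, le_div_iff₀ hγ, mul_comm (LSAux.enorm (Pt *ᵥ y)) γ]
    linarith
  -- structural identities
  have e3 : Mᵀ * (M * P) = Mᵀ := by
    calc Mᵀ * (M * P) = Mᵀ * (M * P)ᵀ := by rw [mA3]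
      _ = ((M * P) * M)ᵀ := by rw [← Matrix.transpose_mul]
      _ = Mᵀ := by rw [mA1]
  have e3W : ∀ W : Matrix (Fin n₁ × ZMod n₃) (Fin n₄ × ZMod n₃) ℝ,
      Mᵀ * (M * (P * W)) = Mᵀ * W := by
    intro W
    calc Mᵀ * (M * (P * W)) = Mᵀ * ((M * P) * W) := by rw [← Matrix.mul_assoc M P W]
      _ = (Mᵀ * (M * P)) * W := (Matrix.mul_assoc Mᵀ (M * P) W).symm
      _ = Mᵀ * W := by rw [e3]
  have e2 : Pt * (Ptᵀ * (M + F)ᵀ) = Pt := by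
    calc Pt * (Ptᵀ * (M + F)ᵀ) = Pt * ((M + F) * Pt)ᵀ := by rw [Matrix.transpose_mul]
      _ = Pt * ((M + F) * Pt) := by rw [mAt3]
      _ = (Pt * (M + F)) * Pt := by rw [Matrix.mul_assoc]
      _ = Pt := by rw [hPtMt, Matrix.one_mul]
  have e2W : ∀ W : Matrix (Fin n₁ × ZMod n₃) (Fin n₄ × ZMod n₃) ℝ,
      Pt * W = Pt * (Ptᵀ * (Mᵀ * W)) + Pt * (Ptᵀ * (Fᵀ * W)) := by
    intro W
    calc Pt * W = (Pt * (Ptᵀ * (M + F)ᵀ)) * W := by rw [e2]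
      _ = Pt * (Ptᵀ * ((Mᵀ + Fᵀ) * W)) := by
          rw [Matrix.transpose_add, Matrix.mul_assoc, Matrix.mul_assoc]
      _ = Pt * (Ptᵀ * (Mᵀ * W) + Ptᵀ * (Fᵀ * W)) := by
          rw [Matrix.add_mul, Matrix.mul_add]
      _ = Pt * (Ptᵀ * (Mᵀ * W)) + Pt * (Ptᵀ * (Fᵀ * W)) := by rw [Matrix.mul_add]
  have t1 : P * N = Pt * (M * (P * N)) + Pt * (F * (P * N)) := by
    calc P * N = (Pt * (M + F)) * (P * N) := by rw [hPtMt, Matrix.one_mul]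
      _ = Pt * ((M + F) * (P * N)) := Matrix.mul_assoc _ _ _
      _ = Pt * (M * (P * N) + F * (P * N)) := by rw [Matrix.add_mul]
      _ = Pt * (M * (P * N)) + Pt * (F * (P * N)) := Matrix.mul_add _ _ _
  have s3 : Pt * (M * (P * N))
      = Pt * (Ptᵀ * (Mᵀ * N)) + Pt * (Ptᵀ * (Fᵀ * (M * (P * N)))) := by
    rw [e2W (M * (P * N)), e3W N]
  have key : Pt * (N + L) - P * N
      = (Pt * L - Pt * (F * (P * N))) + Pt * (Ptᵀ * (Fᵀ * (N - M * (P * N)))) := by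
    have hsplit : Pt * (Ptᵀ * (Fᵀ * (N - M * (P * N))))
        = Pt * (Ptᵀ * (Fᵀ * N)) - Pt * (Ptᵀ * (Fᵀ * (M * (P * N)))) := by
      rw [Matrix.mul_sub Fᵀ, Matrix.mul_sub Ptᵀ, Matrix.mul_sub Pt]
    rw [hsplit, Matrix.mul_add Pt N L, e2W N]
    conv_lhs => rw [t1]
    rw [s3]
    abel
  -- generic bounds for the three terms
  have hFt : ‖Fᵀ‖ = ‖F‖ := transpose_norm F
  have hPtt : ‖Ptᵀ‖ = ‖Pt‖ := transpose_norm Pt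
  -- Frobenius-norm bound at matrix level
  have hfrob : frobM (Pt * (N + L) - P * N)
      ≤ c * (‖F‖ * frobM (P * N) + frobM L + c * ‖F‖ * frobM (N - M * (P * N))) := by
    rw [key]
    have b1 : frobM (Pt * L) ≤ c * frobM L :=
      le_trans (frobM_mul_le _ _)
        (mul_le_mul_of_nonneg_right hPtle (frobM_nonneg _))
    have b2 : frobM (Pt * (F * (P * N))) ≤ c * (‖F‖ * frobM (P * N)) := by
      refine le_trans (frobM_mul_le _ _) ?_
      have : frobM (F * (P * N)) ≤ ‖F‖ * frobM (P * N) := frobM_mul_le _ _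
      calc ‖Pt‖ * frobM (F * (P * N)) ≤ ‖Pt‖ * (‖F‖ * frobM (P * N)) :=
            mul_le_mul_of_nonneg_left this (norm_nonneg _)
        _ ≤ c * (‖F‖ * frobM (P * N)) :=
            mul_le_mul_of_nonneg_right hPtle
              (mul_nonneg (norm_nonneg _) (frobM_nonneg _))
    have b3 : frobM (Pt * (Ptᵀ * (Fᵀ * (N - M * (P * N)))))
        ≤ c * (c * (‖F‖ * frobM (N - M * (P * N)))) := by
      refine le_trans (frobM_mul_le _ _) ?_
      have h1 : frobM (Ptᵀ * (Fᵀ * (N - M * (P * N))))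
          ≤ c * (‖F‖ * frobM (N - M * (P * N))) := by
        refine le_trans (frobM_mul_le _ _) ?_
        have h2 : frobM (Fᵀ * (N - M * (P * N))) ≤ ‖F‖ * frobM (N - M * (P * N)) := by
          have := frobM_mul_le Fᵀ (N - M * (P * N))
          rwa [hFt] at this
        calc ‖Ptᵀ‖ * frobM (Fᵀ * (N - M * (P * N)))
            ≤ ‖Ptᵀ‖ * (‖F‖ * frobM (N - M * (P * N))) :=
              mul_le_mul_of_nonneg_left h2 (norm_nonneg _)
          _ ≤ c * (‖F‖ * frobM (N - M * (P * N))) := by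
              rw [hPtt]
              exact mul_le_mul_of_nonneg_right hPtle
                (mul_nonneg (norm_nonneg _) (frobM_nonneg _))
      calc ‖Pt‖ * frobM (Ptᵀ * (Fᵀ * (N - M * (P * N))))
          ≤ ‖Pt‖ * (c * (‖F‖ * frobM (N - M * (P * N)))) :=
            mul_le_mul_of_nonneg_left h1 (norm_nonneg _)
        _ ≤ c * (c * (‖F‖ * frobM (N - M * (P * N)))) :=
            mul_le_mul_of_nonneg_right hPtle
              (mul_nonneg hc0 (mul_nonneg (norm_nonneg _) (frobM_nonneg _)))
    calc frobM ((Pt * L - Pt * (F * (P * N))) + Pt * (Ptᵀ * (Fᵀ * (N - M * (P * N)))))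
        ≤ frobM (Pt * L - Pt * (F * (P * N)))
            + frobM (Pt * (Ptᵀ * (Fᵀ * (N - M * (P * N))))) := frobM_add_le _ _
      _ ≤ (frobM (Pt * L) + frobM (Pt * (F * (P * N))))
            + frobM (Pt * (Ptᵀ * (Fᵀ * (N - M * (P * N))))) :=
          add_le_add_left (frobM_sub_le _ _) _
      _ ≤ (c * frobM L + c * (‖F‖ * frobM (P * N)))
            + c * (c * (‖F‖ * frobM (N - M * (P * N)))) :=
          add_le_add (add_le_add b1 b2) b3
      _ = c * (‖F‖ * frobM (P * N) + frobM L + c * ‖F‖ * frobM (N - M * (P * N))) := by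
          ring
  -- spectral-norm bound at matrix level
  have hspec : ‖Pt * (N + L) - P * N‖
      ≤ c * (‖F‖ * ‖P * N‖ + ‖L‖ + c * ‖F‖ * ‖N - M * (P * N)‖) := by
    rw [key]
    have b1 : ‖Pt * L‖ ≤ c * ‖L‖ :=
      le_trans (Matrix.l2_opNorm_mul _ _)
        (mul_le_mul_of_nonneg_right hPtle (norm_nonneg _))
    have b2 : ‖Pt * (F * (P * N))‖ ≤ c * (‖F‖ * ‖P * N‖) := by
      refine le_trans (Matrix.l2_opNorm_mul _ _) ?_
      have h2 : ‖F * (P * N)‖ ≤ ‖F‖ * ‖P * N‖ := Matrix.l2_opNorm_mul _ _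
      calc ‖Pt‖ * ‖F * (P * N)‖ ≤ ‖Pt‖ * (‖F‖ * ‖P * N‖) :=
            mul_le_mul_of_nonneg_left h2 (norm_nonneg _)
        _ ≤ c * (‖F‖ * ‖P * N‖) :=
            mul_le_mul_of_nonneg_right hPtle
              (mul_nonneg (norm_nonneg _) (norm_nonneg _))
    have b3 : ‖Pt * (Ptᵀ * (Fᵀ * (N - M * (P * N))))‖
        ≤ c * (c * (‖F‖ * ‖N - M * (P * N)‖)) := by
      refine le_trans (Matrix.l2_opNorm_mul _ _) ?_
      have h1 : ‖Ptᵀ * (Fᵀ * (N - M * (P * N)))‖ ≤ c * (‖F‖ * ‖N - M * (P * N)‖) := by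
        refine le_trans (Matrix.l2_opNorm_mul _ _) ?_
        have h2 : ‖Fᵀ * (N - M * (P * N))‖ ≤ ‖F‖ * ‖N - M * (P * N)‖ := by
          have := Matrix.l2_opNorm_mul Fᵀ (N - M * (P * N))
          rwa [hFt] at this
        calc ‖Ptᵀ‖ * ‖Fᵀ * (N - M * (P * N))‖
            ≤ ‖Ptᵀ‖ * (‖F‖ * ‖N - M * (P * N)‖) :=
              mul_le_mul_of_nonneg_left h2 (norm_nonneg _)
          _ ≤ c * (‖F‖ * ‖N - M * (P * N)‖) := by
              rw [hPtt]
              exact mul_le_mul_of_nonneg_right hPtle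
                (mul_nonneg (norm_nonneg _) (norm_nonneg _))
      calc ‖Pt‖ * ‖Ptᵀ * (Fᵀ * (N - M * (P * N)))‖
          ≤ ‖Pt‖ * (c * (‖F‖ * ‖N - M * (P * N)‖)) :=
            mul_le_mul_of_nonneg_left h1 (norm_nonneg _)
        _ ≤ c * (c * (‖F‖ * ‖N - M * (P * N)‖)) :=
            mul_le_mul_of_nonneg_right hPtle
              (mul_nonneg hc0 (mul_nonneg (norm_nonneg _) (norm_nonneg _)))
    calc ‖(Pt * L - Pt * (F * (P * N))) + Pt * (Ptᵀ * (Fᵀ * (N - M * (P * N))))‖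
        ≤ ‖Pt * L - Pt * (F * (P * N))‖
            + ‖Pt * (Ptᵀ * (Fᵀ * (N - M * (P * N))))‖ := norm_add_le _ _
      _ ≤ (‖Pt * L‖ + ‖Pt * (F * (P * N))‖)
            + ‖Pt * (Ptᵀ * (Fᵀ * (N - M * (P * N))))‖ :=
          add_le_add_left (norm_sub_le _ _) _
      _ ≤ (c * ‖L‖ + c * (‖F‖ * ‖P * N‖)) + c * (c * (‖F‖ * ‖N - M * (P * N)‖)) :=
          add_le_add (add_le_add b1 b2) b3
      _ = c * (‖F‖ * ‖P * N‖ + ‖L‖ + c * ‖F‖ * ‖N - M * (P * N)‖) := by ring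
  -- translate back to tensors
  have hbH : bcirc (tProd Atp (B + K) - tProd Ap B) = Pt * (N + L) - P * N := by
    rw [bcirc_sub, bcirc_mul, bcirc_mul, bcirc_add]
  have hbX : bcirc (tProd Ap B) = P * N := bcirc_mul Ap B
  have hbR : bcirc (B - tProd A (tProd Ap B)) = N - M * (P * N) := by
    rw [bcirc_sub, bcirc_mul, bcirc_mul]
  have hspecAp : specNorm Ap = ‖P‖ := rfl
  have hspecE : specNorm E = ‖F‖ := rfl
  have hcgoal : specNorm Ap / (1 - specNorm Ap * specNorm E) = c := rfl
  constructor
  · -- Frobenius bound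
    have hs : (0 : ℝ) < Real.sqrt n₃ := by
      have : (0 : ℝ) < n₃ := by
        exact_mod_cast Nat.pos_of_ne_zero (NeZero.ne n₃)
      exact Real.sqrt_pos.mpr this
    have hH : frobM (Pt * (N + L) - P * N)
        = Real.sqrt n₃ * frobNorm (tProd Atp (B + K) - tProd Ap B) := by
      rw [← hbH, frobM_bcirc]
    have hX : frobM (P * N) = Real.sqrt n₃ * frobNorm (tProd Ap B) := by
      rw [← hbX, frobM_bcirc]
    have hL' : frobM L = Real.sqrt n₃ * frobNorm K := by
      rw [hLdef, frobM_bcirc]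
    have hR : frobM (N - M * (P * N))
        = Real.sqrt n₃ * frobNorm (B - tProd A (tProd Ap B)) := by
      rw [← hbR, frobM_bcirc]
    rw [hH, hX, hL', hR] at hfrob
    rw [hcgoal, hspecE]
    refine le_of_mul_le_mul_left ?_ hs
    calc Real.sqrt n₃ * frobNorm (tProd Atp (B + K) - tProd Ap B)
        ≤ c * (‖F‖ * (Real.sqrt n₃ * frobNorm (tProd Ap B))
            + Real.sqrt n₃ * frobNorm K
            + c * ‖F‖ * (Real.sqrt n₃ * frobNorm (B - tProd A (tProd Ap B)))) := hfrob
      _ = Real.sqrt n₃ * (c * (‖F‖ * frobNorm (tProd Ap B) + frobNorm K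
            + c * ‖F‖ * frobNorm (B - tProd A (tProd Ap B)))) := by ring
  · -- spectral bound
    have hH : specNorm (tProd Atp (B + K) - tProd Ap B) = ‖Pt * (N + L) - P * N‖ := by
      rw [specNorm, hbH]
    have hX : specNorm (tProd Ap B) = ‖P * N‖ := by rw [specNorm, hbX]
    have hR : specNorm (B - tProd A (tProd Ap B)) = ‖N - M * (P * N)‖ := by
      rw [specNorm, hbR]
    have hK : specNorm K = ‖L‖ := rfl
    rw [hcgoal, hspecE, hH, hX, hR, hK]
    exact hspec
end

section
/- Let A be a real tensor of size n₁×n₂×n₃ with Moore-Penrose inverse Ap, and let D be a tensor of size n₁×n₄×n₃. Then the tensor equation A*X = D (X of size n₂×n₄×n₃) has a solution if and only if A*Ap*D = D; moreover, in that case, a tensor X of size n₂×n₄×n₃ satisfies A*X = D if and only if X = Ap*D + (𝓘 − Ap*A)*Y for some tensor Y of size n₂×n₄×n₃, where 𝓘 is the identity tensor of size n₂×n₂×n₃. -/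
open scoped Matrix.Norms.L2Operator

lemma tProd_assoc {n₁ n₂ n₃ n₄ n₅ : ℕ} [NeZero n₃]
    (A : Fin n₁ → Fin n₂ → ZMod n₃ → ℝ) (B : Fin n₂ → Fin n₄ → ZMod n₃ → ℝ)
    (C : Fin n₄ → Fin n₅ → ZMod n₃ → ℝ) :
    tProd (tProd A B) C = tProd A (tProd B C) := by
  funext i j k
  simp only [tProd, Finset.sum_mul, Finset.mul_sum]
  conv_lhs => enter [2, l]; rw [Finset.sum_comm]
  rw [Finset.sum_comm]
  conv_rhs => enter [2, p]; rw [Finset.sum_comm]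
  conv_rhs => enter [2, p, 2, l]; rw [Finset.sum_comm]
  refine Finset.sum_congr rfl fun p _ => Finset.sum_congr rfl fun l _ =>
    Finset.sum_congr rfl fun m _ => ?_
  refine Fintype.sum_equiv (Equiv.addRight m) _ _ fun q => ?_
  simp only [Equiv.coe_addRight]
  rw [add_sub_cancel_right, sub_add_eq_sub_sub, sub_right_comm]
  ring

lemma tId_tProd {n n₃ n₄ : ℕ} [NeZero n₃] (B : Fin n → Fin n₄ → ZMod n₃ → ℝ) :
    tProd (tId n n₃) B = B := by
  funext i j k
  simp only [tProd, tId]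
  rw [Finset.sum_eq_single i]
  · rw [Finset.sum_eq_single k]
    · simp
    · intro b _ hb
      have : ¬(i = i ∧ k - b = 0) := fun h => hb (sub_eq_zero.mp h.2).symm
      rw [if_neg this, zero_mul]
    · simp
  · intro b _ hb; simp [hb.symm]
  · simp

lemma tProd_sub_left {n₁ n₂ n₃ n₄ : ℕ} [NeZero n₃]
    (A B : Fin n₁ → Fin n₂ → ZMod n₃ → ℝ) (C : Fin n₂ → Fin n₄ → ZMod n₃ → ℝ) :
    tProd (A - B) C = tProd A C - tProd B C := by
  funext i j k
  simp [tProd, sub_mul, Finset.sum_sub_distrib]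

lemma tProd_add_right {n₁ n₂ n₃ n₄ : ℕ} [NeZero n₃]
    (A : Fin n₁ → Fin n₂ → ZMod n₃ → ℝ) (B C : Fin n₂ → Fin n₄ → ZMod n₃ → ℝ) :
    tProd A (B + C) = tProd A B + tProd A C := by
  funext i j k
  simp [tProd, mul_add, Finset.sum_add_distrib]


lemma tProd_sub_right {n₁ n₂ n₃ n₄ : ℕ} [NeZero n₃]
    (A : Fin n₁ → Fin n₂ → ZMod n₃ → ℝ) (B C : Fin n₂ → Fin n₄ → ZMod n₃ → ℝ) :
    tProd A (B - C) = tProd A B - tProd A C := by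
  funext i j k
  simp [tProd, mul_sub, Finset.sum_sub_distrib]

lemma zero_tProd {n₁ n₂ n₃ n₄ : ℕ} [NeZero n₃] (B : Fin n₂ → Fin n₄ → ZMod n₃ → ℝ) :
    tProd (0 : Fin n₁ → Fin n₂ → ZMod n₃ → ℝ) B = 0 := by
  funext i j k
  simp [tProd]

lemma tProd_tId {n₁ n n₃ : ℕ} [NeZero n₃] (A : Fin n₁ → Fin n → ZMod n₃ → ℝ) :
    tProd A (tId n n₃) = A := by
  funext i j k
  simp only [tProd, tId]
  rw [Finset.sum_eq_single j]
  · rw [Finset.sum_eq_single (0 : ZMod n₃)]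
    · simp
    · intro b _ hb
      rw [if_neg (fun h => hb h.2), mul_zero]
    · simp
  · intro b _ hb
    rw [Finset.sum_eq_zero]
    intro m _
    rw [if_neg (fun h => hb h.1), mul_zero]
  · simp

theorem tensor_equation_solvability (n₁ n₂ n₃ n₄ : ℕ) [NeZero n₃]
    (hn₁ : 0 < n₁) (hn₂ : 0 < n₂) (hn₄ : 0 < n₄)
    (A : Fin n₁ → Fin n₂ → ZMod n₃ → ℝ)
    (Ap : Fin n₂ → Fin n₁ → ZMod n₃ → ℝ)
    (hAp : IsMPInv A Ap)
    (D : Fin n₁ → Fin n₄ → ZMod n₃ → ℝ) :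
    ((∃ X : Fin n₂ → Fin n₄ → ZMod n₃ → ℝ, tProd A X = D) ↔
        tProd (tProd A Ap) D = D) ∧
      (tProd (tProd A Ap) D = D →
        ∀ X : Fin n₂ → Fin n₄ → ZMod n₃ → ℝ,
          tProd A X = D ↔
            ∃ Y : Fin n₂ → Fin n₄ → ZMod n₃ → ℝ,
              X = tProd Ap D + tProd (tId n₂ n₃ - tProd Ap A) Y) := by
  obtain ⟨h1, h2, h3, h4⟩ := hAp
  constructor
  · constructor
    · rintro ⟨X, rfl⟩
      rw [tProd_assoc, ← tProd_assoc, ← tProd_assoc, h1]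
    · intro h
      refine ⟨tProd Ap D, ?_⟩
      rw [← tProd_assoc, h]
  · intro hD X
    constructor
    · intro hX
      refine ⟨X, ?_⟩
      rw [tProd_sub_left, tId_tProd, ← hX, ← tProd_assoc, tProd_assoc]
      abel
    · rintro ⟨Y, rfl⟩
      rw [tProd_add_right, ← tProd_assoc, hD, ← tProd_assoc, tProd_sub_right,
        tProd_tId, ← tProd_assoc, h1, sub_self, zero_tProd, add_zero]
end

section
/- (Sherman–Morrison–Woodbury formula for the tensor Moore-Penrose inverse.) Let A be a real tensor of size n₁×n₁×n₃ with Moore-Penrose inverse Ap, and B a tensor of size n₂×n₂×n₃ with Moore-Penrose inverse Bp. Let X₁, Y₁, X₂, Y₂ be tensors of size n₁×n₂×n₃ such that: X₁ = A*W₁ for some tensor W₁ of size n₁×n₂×n₃ and Aᵀ*Y₁ = 0; X₂ = Aᵀ*W₂ for some tensor W₂ of size n₁×n₂×n₃ and A*Y₂ = 0. Let G₁ be a Moore-Penrose inverse of Y₁ᵀ*Y₁ and G₂ a Moore-Penrose inverse of Y₂ᵀ*Y₂, and set E₁ = Y₁*G₁ and E₂ = Y₂*G₂. Assume: (i) E₂*Bp*E₁ᵀ*Y₁*B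 = E₂; (ii) X₁*E₁ᵀ*Y₁*B = X₁*B; (iii) Y₁*E₁ᵀ*Y₁ = Y₁; (iv) B*Y₂ᵀ*E₂*Bp*E₁ᵀ = E₁ᵀ; (v) B*Y₂ᵀ*E₂*X₂ᵀ = B*X₂ᵀ; (vi) E₂*Y₂ᵀ*E₂ = E₂. Set M = A + (X₁+Y₁)*B*(X₂+Y₂)ᵀ and Q = Ap − E₂*X₂ᵀ*Ap − Ap*X₁*E₁ᵀ + E₂*(Bp + X₂ᵀ*Ap*X₁)*E₁ᵀ. Then Q is a Moore-Penrose inverse of M, i.e. M*Q*M = M, Q*M*Q = Q, (M*Q)ᵀ = M*Q and (Q*M)ᵀ = Q*M. -/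
open scoped Matrix.Norms.L2Operator

section MatrixMP
open Matrix
variable {m n : Type} [Fintype m] [Fintype n]

def MPm (A : Matrix m n ℝ) (X : Matrix n m ℝ) : Prop :=
  A * X * A = A ∧ X * A * X = X ∧ (A * X)ᵀ = A * X ∧ (X * A)ᵀ = X * A

lemma MPm.transpose {A : Matrix m n ℝ} {X : Matrix n m ℝ} (h : MPm A X) : MPm Aᵀ Xᵀ := by
  obtain ⟨p1, p2, p3, p4⟩ := h
  refine ⟨?_, ?_, ?_, ?_⟩
  · rw [← Matrix.transpose_mul, ← Matrix.transpose_mul, ← Matrix.mul_assoc, p1]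
  · rw [← Matrix.transpose_mul, ← Matrix.transpose_mul, ← Matrix.mul_assoc, p2]
  · rw [← Matrix.transpose_mul, Matrix.transpose_transpose, p4]
  · rw [← Matrix.transpose_mul, Matrix.transpose_transpose, p3]

lemma MPm.unique {A : Matrix m n ℝ} {X Y : Matrix n m ℝ}
    (hX : MPm A X) (hY : MPm A Y) : X = Y := by
  obtain ⟨x1, x2, x3, x4⟩ := hX
  obtain ⟨y1, y2, y3, y4⟩ := hY
  have hax : A * X = A * Y := by
    calc A * X = (A * X)ᵀ := x3.symm
      _ = ((A * Y * A) * X)ᵀ := by rw [y1]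
      _ = ((A * Y) * (A * X))ᵀ := by rw [Matrix.mul_assoc (A * Y) A X]
      _ = (A * X)ᵀ * (A * Y)ᵀ := Matrix.transpose_mul _ _
      _ = (A * X) * (A * Y) := by rw [x3, y3]
      _ = ((A * X) * A) * Y := by rw [← Matrix.mul_assoc (A * X) A Y]
      _ = A * Y := by rw [x1]
  have hxa : X * A = Y * A := by
    calc X * A = (X * A)ᵀ := x4.symm
      _ = (X * (A * Y * A))ᵀ := by rw [y1]
      _ = ((X * A) * (Y * A))ᵀ := by
            rw [Matrix.mul_assoc A Y A, ← Matrix.mul_assoc X A (Y * A)]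
      _ = (Y * A)ᵀ * (X * A)ᵀ := Matrix.transpose_mul _ _
      _ = (Y * A) * (X * A) := by rw [x4, y4]
      _ = Y * ((A * X) * A) := by
            rw [Matrix.mul_assoc Y A (X * A), ← Matrix.mul_assoc A X A]
      _ = Y * A := by rw [x1]
  calc X = X * A * X := x2.symm
    _ = Y * A * X := by rw [hxa]
    _ = Y * (A * X) := by rw [Matrix.mul_assoc]
    _ = Y * (A * Y) := by rw [hax]
    _ = Y * A * Y := by rw [Matrix.mul_assoc]
    _ = Y := y2

lemma matrixSMW
    (A Ap : Matrix m m ℝ) (B Bp : Matrix n n ℝ)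
    (X₁ Y₁ X₂ Y₂ E₁ E₂ W₁ W₂ : Matrix m n ℝ) (G₁ G₂ : Matrix n n ℝ)
    (hAp : MPm A Ap) (hBp : MPm B Bp)
    (hW₁ : X₁ = A * W₁) (hY₁ : Aᵀ * Y₁ = 0)
    (hW₂ : X₂ = Aᵀ * W₂) (hY₂ : A * Y₂ = 0)
    (hG₁ : MPm (Y₁ᵀ * Y₁) G₁) (hG₂ : MPm (Y₂ᵀ * Y₂) G₂)
    (hE₁ : E₁ = Y₁ * G₁) (hE₂ : E₂ = Y₂ * G₂)
    (h1 : E₂ * Bp * E₁ᵀ * Y₁ * B = E₂) (h2 : X₁ * E₁ᵀ * Y₁ * B = X₁ * B)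
    (h3 : Y₁ * E₁ᵀ * Y₁ = Y₁) (h4 : B * Y₂ᵀ * E₂ * Bp * E₁ᵀ = E₁ᵀ)
    (h5 : B * Y₂ᵀ * E₂ * X₂ᵀ = B * X₂ᵀ) (h6 : E₂ * Y₂ᵀ * E₂ = E₂) :
    MPm (A + (X₁ + Y₁) * B * (X₂ + Y₂)ᵀ)
      (Ap - E₂ * X₂ᵀ * Ap - Ap * X₁ * E₁ᵀ + E₂ * (Bp + X₂ᵀ * Ap * X₁) * E₁ᵀ) := by
  obtain ⟨pa1, pa2, pa3, pa4⟩ := hAp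
  have hG₁t : MPm (Y₁ᵀ * Y₁) G₁ᵀ := by
    have := hG₁.transpose
    rwa [Matrix.transpose_mul, Matrix.transpose_transpose] at this
  have hG₁s : G₁ᵀ = G₁ := hG₁t.unique hG₁
  have hG₂t : MPm (Y₂ᵀ * Y₂) G₂ᵀ := by
    have := hG₂.transpose
    rwa [Matrix.transpose_mul, Matrix.transpose_transpose] at this
  have hG₂s : G₂ᵀ = G₂ := hG₂t.unique hG₂
  have eAp : Ap = Ap * Apᵀ * Aᵀ := by
    calc Ap = Ap * A * Ap := pa2.symm
      _ = Ap * (A * Ap) := Matrix.mul_assoc _ _ _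
      _ = Ap * (A * Ap)ᵀ := by rw [pa3]
      _ = Ap * (Apᵀ * Aᵀ) := by rw [Matrix.transpose_mul]
      _ = Ap * Apᵀ * Aᵀ := (Matrix.mul_assoc _ _ _).symm
  have eAp' : Ap = Aᵀ * Apᵀ * Ap := by
    calc Ap = Ap * A * Ap := pa2.symm
      _ = (Ap * A)ᵀ * Ap := by rw [pa4]
      _ = Aᵀ * Apᵀ * Ap := by rw [Matrix.transpose_mul]
  have d1 : Ap * Y₁ = 0 := by
    conv_lhs => rw [eAp]
    rw [Matrix.mul_assoc, hY₁, Matrix.mul_zero]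
  have d1l : ∀ (p : Type) (R : Matrix p m ℝ), R * Ap * Y₁ = 0 := fun p R => by
    rw [Matrix.mul_assoc, d1, Matrix.mul_zero]
  have hY₁t : Y₁ᵀ * A = 0 := by
    have := congrArg Matrix.transpose hY₁
    simpa [Matrix.transpose_mul] using this
  have hY₂t : Y₂ᵀ * Aᵀ = 0 := by
    have := congrArg Matrix.transpose hY₂
    simpa [Matrix.transpose_mul] using this
  have d2 : Y₂ᵀ * Ap = 0 := by
    conv_lhs => rw [eAp']
    rw [← Matrix.mul_assoc, ← Matrix.mul_assoc, hY₂t, Matrix.zero_mul, Matrix.zero_mul]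
  have d2l : ∀ (p : Type) (R : Matrix p n ℝ), R * Y₂ᵀ * Ap = 0 := fun p R => by
    rw [Matrix.mul_assoc, d2, Matrix.mul_zero]
  have d3 : A * E₂ = 0 := by
    rw [hE₂, ← Matrix.mul_assoc, hY₂, Matrix.zero_mul]
  have d3l : ∀ (p : Type) (R : Matrix p m ℝ), R * A * E₂ = 0 := fun p R => by
    rw [Matrix.mul_assoc, d3, Matrix.mul_zero]
  have d5 : E₁ᵀ * A = 0 := by
    rw [hE₁, Matrix.transpose_mul, Matrix.mul_assoc, hY₁t, Matrix.mul_zero]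
  have d5l : ∀ (p : Type) (R : Matrix p n ℝ), R * E₁ᵀ * A = 0 := fun p R => by
    rw [Matrix.mul_assoc, d5, Matrix.mul_zero]
  have d6 : E₁ᵀ * X₁ = 0 := by
    rw [hW₁, ← Matrix.mul_assoc, d5, Matrix.zero_mul]
  have d6l : ∀ (p : Type) (R : Matrix p n ℝ), R * E₁ᵀ * X₁ = 0 := fun p R => by
    rw [Matrix.mul_assoc, d6, Matrix.mul_zero]
  have hX₂t : X₂ᵀ = W₂ᵀ * A := by
    rw [hW₂, Matrix.transpose_mul, Matrix.transpose_transpose]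
  have d7 : X₂ᵀ * E₂ = 0 := by
    rw [hX₂t, Matrix.mul_assoc, d3, Matrix.mul_zero]
  have d7l : ∀ (p : Type) (R : Matrix p n ℝ), R * X₂ᵀ * E₂ = 0 := fun p R => by
    rw [Matrix.mul_assoc, d7, Matrix.mul_zero]
  have d8 : A * Ap * X₁ = X₁ := by
    rw [hW₁, ← Matrix.mul_assoc, pa1]
  have d9 : X₂ᵀ * Ap * A = X₂ᵀ := by
    rw [hX₂t, Matrix.mul_assoc W₂ᵀ A Ap, Matrix.mul_assoc W₂ᵀ (A * Ap) A, pa1]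
  have d9l : ∀ (p : Type) (R : Matrix p n ℝ), R * X₂ᵀ * Ap * A = R * X₂ᵀ := fun p R => by
    simpa only [← Matrix.mul_assoc] using congrArg (fun Z => R * Z) d9
  have d10 : A * Ap * Y₁ = 0 := by rw [Matrix.mul_assoc, d1, Matrix.mul_zero]
  have d11 : Ap * A * E₂ = 0 := by rw [Matrix.mul_assoc, d3, Matrix.mul_zero]
  have h2l : ∀ (p : Type) (R : Matrix p m ℝ), R * X₁ * E₁ᵀ * Y₁ * B = R * X₁ * B :=
    fun p R => by simpa only [← Matrix.mul_assoc] using congrArg (fun Z => R * Z) h2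
  have h4l : ∀ (p : Type) (R : Matrix p n ℝ), R * B * Y₂ᵀ * E₂ * Bp * E₁ᵀ = R * E₁ᵀ :=
    fun p R => by simpa only [← Matrix.mul_assoc] using congrArg (fun Z => R * Z) h4
  have h5l : ∀ (p : Type) (R : Matrix p n ℝ), R * B * Y₂ᵀ * E₂ * X₂ᵀ = R * B * X₂ᵀ :=
    fun p R => by simpa only [← Matrix.mul_assoc] using congrArg (fun Z => R * Z) h5
  have hMQ : (A + (X₁ + Y₁) * B * (X₂ + Y₂)ᵀ) *
      (Ap - E₂ * X₂ᵀ * Ap - Ap * X₁ * E₁ᵀ + E₂ * (Bp + X₂ᵀ * Ap * X₁) * E₁ᵀ) =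
      A * Ap + Y₁ * E₁ᵀ := by
    simp only [Matrix.add_mul, Matrix.mul_add, Matrix.sub_mul, Matrix.mul_sub,
      Matrix.transpose_add, ← Matrix.mul_assoc, d1, d1l, d2, d2l, d3, d3l, d5, d5l, d6, d6l,
      d7, d7l, d8, d9, d9l, d10, d11, pa1, pa2, h1, h2, h2l, h3, h4, h4l, h5, h5l, h6,
      Matrix.zero_mul, Matrix.mul_zero, Matrix.neg_mul, Matrix.mul_neg, neg_zero,
      add_zero, zero_add, sub_zero, zero_sub]
    abel
  have hQM : (Ap - E₂ * X₂ᵀ * Ap - Ap * X₁ * E₁ᵀ + E₂ * (Bp + X₂ᵀ * Ap * X₁) * E₁ᵀ) *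
      (A + (X₁ + Y₁) * B * (X₂ + Y₂)ᵀ) = Ap * A + E₂ * Y₂ᵀ := by
    simp only [Matrix.add_mul, Matrix.mul_add, Matrix.sub_mul, Matrix.mul_sub,
      Matrix.transpose_add, ← Matrix.mul_assoc, d1, d1l, d2, d2l, d3, d3l, d5, d5l, d6, d6l,
      d7, d7l, d8, d9, d9l, d10, d11, pa1, pa2, h1, h2, h2l, h3, h4, h4l, h5, h5l, h6,
      Matrix.zero_mul, Matrix.mul_zero, Matrix.neg_mul, Matrix.mul_neg, neg_zero,
      add_zero, zero_add, sub_zero, zero_sub]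
    abel
  have hsym1 : (Y₁ * E₁ᵀ)ᵀ = Y₁ * E₁ᵀ := by
    rw [Matrix.transpose_mul, Matrix.transpose_transpose, hE₁, Matrix.transpose_mul, hG₁s]
    exact Matrix.mul_assoc _ _ _
  have hsym2 : (E₂ * Y₂ᵀ)ᵀ = E₂ * Y₂ᵀ := by
    rw [Matrix.transpose_mul, Matrix.transpose_transpose, hE₂, Matrix.transpose_mul, hG₂s]
    exact (Matrix.mul_assoc _ _ _).symm
  refine ⟨?_, ?_, ?_, ?_⟩
  · rw [hMQ]
    simp only [Matrix.add_mul, Matrix.mul_add, Matrix.sub_mul, Matrix.mul_sub,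
      Matrix.transpose_add, ← Matrix.mul_assoc, d1, d1l, d2, d2l, d3, d3l, d5, d5l, d6, d6l,
      d7, d7l, d8, d9, d9l, d10, d11, pa1, pa2, h1, h2, h2l, h3, h4, h4l, h5, h5l, h6,
      Matrix.zero_mul, Matrix.mul_zero, Matrix.neg_mul, Matrix.mul_neg, neg_zero,
      add_zero, zero_add, sub_zero, zero_sub]
  · rw [hQM]
    simp only [Matrix.add_mul, Matrix.mul_add, Matrix.sub_mul, Matrix.mul_sub,
      Matrix.transpose_add, ← Matrix.mul_assoc, d1, d1l, d2, d2l, d3, d3l, d5, d5l, d6, d6l,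
      d7, d7l, d8, d9, d9l, d10, d11, pa1, pa2, h1, h2, h2l, h3, h4, h4l, h5, h5l, h6,
      Matrix.zero_mul, Matrix.mul_zero, Matrix.neg_mul, Matrix.mul_neg, neg_zero,
      add_zero, zero_add, sub_zero, zero_sub]
  · rw [hMQ, Matrix.transpose_add, pa3, hsym1]
  · rw [hQM, Matrix.transpose_add, pa4, hsym2]

end MatrixMP

section BC
open Matrix
set_option linter.unusedSectionVars false
variable {n₁ n₂ n₃ n₄ : ℕ} [NeZero n₃]

lemma bcirc_tProd (A : Fin n₁ → Fin n₂ → ZMod n₃ → ℝ) (B : Fin n₂ → Fin n₄ → ZMod n₃ → ℝ) :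
    bcirc (tProd A B) = bcirc A * bcirc B := by
  ext ⟨i, k⟩ ⟨j, k'⟩
  simp only [bcirc, tProd, Matrix.mul_apply, Fintype.sum_prod_type]
  refine Finset.sum_congr rfl fun l _ => ?_
  rw [← Equiv.sum_comp (Equiv.addRight k') (fun m => A i l (k - m) * B l j (m - k'))]
  refine Finset.sum_congr rfl fun m _ => ?_
  simp only [Equiv.coe_addRight, add_sub_cancel_right]
  ring_nf

lemma bcirc_tTrans (A : Fin n₁ → Fin n₂ → ZMod n₃ → ℝ) :
    bcirc (tTrans A) = (bcirc A)ᵀ := by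
  ext ⟨i, k⟩ ⟨j, k'⟩
  simp [bcirc, tTrans, Matrix.transpose_apply, neg_sub]

lemma bcirc_add (A B : Fin n₁ → Fin n₂ → ZMod n₃ → ℝ) :
    bcirc (A + B) = bcirc A + bcirc B := rfl

lemma bcirc_sub (A B : Fin n₁ → Fin n₂ → ZMod n₃ → ℝ) :
    bcirc (A - B) = bcirc A - bcirc B := rfl

lemma bcirc_zero : bcirc (0 : Fin n₁ → Fin n₂ → ZMod n₃ → ℝ) = 0 := rfl

lemma bcirc_inj {A B : Fin n₁ → Fin n₂ → ZMod n₃ → ℝ} (h : bcirc A = bcirc B) : A = B := by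
  funext i j k
  have := congrFun (congrFun h (i, k)) (j, (0 : ZMod n₃))
  simpa [bcirc] using this

lemma isMPInv_iff_MPm (A : Fin n₁ → Fin n₂ → ZMod n₃ → ℝ) (X : Fin n₂ → Fin n₁ → ZMod n₃ → ℝ) :
    IsMPInv A X ↔ MPm (bcirc A) (bcirc X) := by
  constructor
  · rintro ⟨a, b, c, d⟩
    refine ⟨?_, ?_, ?_, ?_⟩
    · rw [← bcirc_tProd, ← bcirc_tProd, a]
    · rw [← bcirc_tProd, ← bcirc_tProd, b]
    · rw [← bcirc_tProd, ← bcirc_tTrans, c]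
    · rw [← bcirc_tProd, ← bcirc_tTrans, d]
  · rintro ⟨a, b, c, d⟩
    refine ⟨?_, ?_, ?_, ?_⟩
    · exact bcirc_inj (by rw [bcirc_tProd, bcirc_tProd, a])
    · exact bcirc_inj (by rw [bcirc_tProd, bcirc_tProd, b])
    · exact bcirc_inj (by rw [bcirc_tTrans, bcirc_tProd, c, ← bcirc_tProd])
    · exact bcirc_inj (by rw [bcirc_tTrans, bcirc_tProd, d, ← bcirc_tProd])

end BC

open Matrix

theorem smw_formula_mp_inverse (n₁ n₂ n₃ : ℕ) [NeZero n₃]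
    (hn₁ : 0 < n₁) (hn₂ : 0 < n₂)
    (A : Fin n₁ → Fin n₁ → ZMod n₃ → ℝ) (Ap : Fin n₁ → Fin n₁ → ZMod n₃ → ℝ)
    (B : Fin n₂ → Fin n₂ → ZMod n₃ → ℝ) (Bp : Fin n₂ → Fin n₂ → ZMod n₃ → ℝ)
    (X₁ Y₁ X₂ Y₂ : Fin n₁ → Fin n₂ → ZMod n₃ → ℝ)
    (G₁ G₂ : Fin n₂ → Fin n₂ → ZMod n₃ → ℝ)
    (hAp : IsMPInv A Ap) (hBp : IsMPInv B Bp)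
    (hX₁ : ∃ W₁ : Fin n₁ → Fin n₂ → ZMod n₃ → ℝ, X₁ = tProd A W₁)
    (hY₁ : tProd (tTrans A) Y₁ = 0)
    (hX₂ : ∃ W₂ : Fin n₁ → Fin n₂ → ZMod n₃ → ℝ, X₂ = tProd (tTrans A) W₂)
    (hY₂ : tProd A Y₂ = 0)
    (hG₁ : IsMPInv (tProd (tTrans Y₁) Y₁) G₁)
    (hG₂ : IsMPInv (tProd (tTrans Y₂) Y₂) G₂)
    (E₁ E₂ : Fin n₁ → Fin n₂ → ZMod n₃ → ℝ)
    (hE₁ : E₁ = tProd Y₁ G₁) (hE₂ : E₂ = tProd Y₂ G₂)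
    (h1 : tProd (tProd (tProd (tProd E₂ Bp) (tTrans E₁)) Y₁) B = E₂)
    (h2 : tProd (tProd (tProd X₁ (tTrans E₁)) Y₁) B = tProd X₁ B)
    (h3 : tProd (tProd Y₁ (tTrans E₁)) Y₁ = Y₁)
    (h4 : tProd (tProd (tProd (tProd B (tTrans Y₂)) E₂) Bp) (tTrans E₁) = tTrans E₁)
    (h5 : tProd (tProd (tProd B (tTrans Y₂)) E₂) (tTrans X₂) = tProd B (tTrans X₂))
    (h6 : tProd (tProd E₂ (tTrans Y₂)) E₂ = E₂) :
    IsMPInv (A + tProd (tProd (X₁ + Y₁) B) (tTrans (X₂ + Y₂)))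
      (Ap - tProd (tProd E₂ (tTrans X₂)) Ap - tProd (tProd Ap X₁) (tTrans E₁) +
        tProd (tProd E₂ (Bp + tProd (tProd (tTrans X₂) Ap) X₁)) (tTrans E₁)) := by
  
  obtain ⟨W₁, hW₁⟩ := hX₁
  obtain ⟨W₂, hW₂⟩ := hX₂
  have pAp : MPm (bcirc A) (bcirc Ap) := (isMPInv_iff_MPm _ _).1 hAp
  have pBp : MPm (bcirc B) (bcirc Bp) := (isMPInv_iff_MPm _ _).1 hBp
  have pW₁ : bcirc X₁ = bcirc A * bcirc W₁ := by
    have := congrArg bcirc hW₁; rwa [bcirc_tProd] at this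
  have pY₁ : (bcirc A)ᵀ * bcirc Y₁ = 0 := by
    have := congrArg bcirc hY₁; rwa [bcirc_tProd, bcirc_tTrans, bcirc_zero] at this
  have pW₂ : bcirc X₂ = (bcirc A)ᵀ * bcirc W₂ := by
    have := congrArg bcirc hW₂; rwa [bcirc_tProd, bcirc_tTrans] at this
  have pY₂ : bcirc A * bcirc Y₂ = 0 := by
    have := congrArg bcirc hY₂; rwa [bcirc_tProd, bcirc_zero] at this
  have pG₁ : MPm ((bcirc Y₁)ᵀ * bcirc Y₁) (bcirc G₁) := by
    have := (isMPInv_iff_MPm _ _).1 hG₁; rwa [bcirc_tProd, bcirc_tTrans] at this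
  have pG₂ : MPm ((bcirc Y₂)ᵀ * bcirc Y₂) (bcirc G₂) := by
    have := (isMPInv_iff_MPm _ _).1 hG₂; rwa [bcirc_tProd, bcirc_tTrans] at this
  have pE₁ : bcirc E₁ = bcirc Y₁ * bcirc G₁ := by
    have := congrArg bcirc hE₁; rwa [bcirc_tProd] at this
  have pE₂ : bcirc E₂ = bcirc Y₂ * bcirc G₂ := by
    have := congrArg bcirc hE₂; rwa [bcirc_tProd] at this
  have p1 : bcirc E₂ * bcirc Bp * (bcirc E₁)ᵀ * bcirc Y₁ * bcirc B = bcirc E₂ := by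
    have := congrArg bcirc h1
    simpa only [bcirc_tProd, bcirc_tTrans] using this
  have p2 : bcirc X₁ * (bcirc E₁)ᵀ * bcirc Y₁ * bcirc B = bcirc X₁ * bcirc B := by
    have := congrArg bcirc h2
    simpa only [bcirc_tProd, bcirc_tTrans] using this
  have p3 : bcirc Y₁ * (bcirc E₁)ᵀ * bcirc Y₁ = bcirc Y₁ := by
    have := congrArg bcirc h3
    simpa only [bcirc_tProd, bcirc_tTrans] using this
  have p4 : bcirc B * (bcirc Y₂)ᵀ * bcirc E₂ * bcirc Bp * (bcirc E₁)ᵀ = (bcirc E₁)ᵀ := by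
    have := congrArg bcirc h4
    simpa only [bcirc_tProd, bcirc_tTrans] using this
  have p5 : bcirc B * (bcirc Y₂)ᵀ * bcirc E₂ * (bcirc X₂)ᵀ = bcirc B * (bcirc X₂)ᵀ := by
    have := congrArg bcirc h5
    simpa only [bcirc_tProd, bcirc_tTrans] using this
  have p6 : bcirc E₂ * (bcirc Y₂)ᵀ * bcirc E₂ = bcirc E₂ := by
    have := congrArg bcirc h6
    simpa only [bcirc_tProd, bcirc_tTrans] using this
  rw [isMPInv_iff_MPm]
  have hM : bcirc (A + tProd (tProd (X₁ + Y₁) B) (tTrans (X₂ + Y₂))) =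
      bcirc A + (bcirc X₁ + bcirc Y₁) * bcirc B * (bcirc X₂ + bcirc Y₂)ᵀ := by
    rw [bcirc_add, bcirc_tProd, bcirc_tProd, bcirc_tTrans, bcirc_add, bcirc_add]
  have hQ : bcirc (Ap - tProd (tProd E₂ (tTrans X₂)) Ap - tProd (tProd Ap X₁) (tTrans E₁) +
      tProd (tProd E₂ (Bp + tProd (tProd (tTrans X₂) Ap) X₁)) (tTrans E₁)) =
      bcirc Ap - bcirc E₂ * (bcirc X₂)ᵀ * bcirc Ap - bcirc Ap * bcirc X₁ * (bcirc E₁)ᵀ +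
        bcirc E₂ * (bcirc Bp + (bcirc X₂)ᵀ * bcirc Ap * bcirc X₁) * (bcirc E₁)ᵀ := by
    rw [bcirc_add, bcirc_sub, bcirc_sub]
    simp only [bcirc_tProd, bcirc_tTrans, bcirc_add]
  rw [hM, hQ]
  exact matrixSMW (bcirc A) (bcirc Ap) (bcirc B) (bcirc Bp) (bcirc X₁) (bcirc Y₁)
    (bcirc X₂) (bcirc Y₂) (bcirc E₁) (bcirc E₂) (bcirc W₁) (bcirc W₂) (bcirc G₁) (bcirc G₂)
    pAp pBp pW₁ pY₁ pW₂ pY₂ pG₁ pG₂ pE₁ pE₂ p1 p2 p3 p4 p5 p6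
end
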